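/- Let q ≥ 2 be an integer, n ∈ ℕ, and φ, β ∈ ℝ. Then (φ+β)^{{n}} = Σ_{m=0}^n C_q(n,m)·φ^{{m}}·β^{{n−m}}. -/

import Mathlib

open Finset

/-- Base-`q` digit sum `{n} = Σ_t n_t`, where `n_t = n / q^t % q` (the sum is over a
range large enough to contain all nonzero digits when `q ≥ 2`). -/
def digitSum (q n : ℕ) : ℕ := ∑ t ∈ Finset.range (n + 1), n / q ^ t % q

/-- Fractal binomial coefficient `C_q(n,m) = Π_t binom(n_t, m_t)`, a product of ordinary
binomial coefficients of corresponding base-`q` digits. -/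
def Cq (q n m : ℕ) : ℕ :=
  ∏ t ∈ Finset.range (n + m + 1), Nat.choose (n / q ^ t % q) (m / q ^ t % q)

lemma digit_zero {q n t : ℕ} (hq : 2 ≤ q) (ht : n < t) : n / q ^ t = 0 := by
  apply Nat.div_eq_of_lt
  have h1 : n < 2 ^ t := lt_of_lt_of_le (Nat.lt_two_pow_self (n := n))
    (Nat.pow_le_pow_right (by norm_num) ht.le)
  exact lt_of_lt_of_le h1 (Nat.pow_le_pow_left hq t)

lemma digitSum_eq {q n N : ℕ} (hq : 2 ≤ q) (hN : n < N) :
    digitSum q n = ∑ t ∈ Finset.range N, n / q ^ t % q := by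
  apply Finset.sum_subset (Finset.range_subset_range.mpr hN)
  intro t _ ht
  rw [Finset.mem_range, not_lt] at ht
  rw [digit_zero hq (by omega), Nat.zero_mod]

lemma Cq_eq {q n m N : ℕ} (hq : 2 ≤ q) (hN : n + m < N) :
    Cq q n m = ∏ t ∈ Finset.range N, Nat.choose (n / q ^ t % q) (m / q ^ t % q) := by
  apply Finset.prod_subset (Finset.range_subset_range.mpr hN)
  intro t _ ht
  rw [Finset.mem_range, not_lt] at ht
  rw [digit_zero (n := n) hq (by omega), digit_zero (n := m) hq (by omega)]
  simp

lemma digitSum_rec {q n : ℕ} (hq : 2 ≤ q) :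
    digitSum q n = n % q + digitSum q (n / q) := by
  rcases Nat.eq_zero_or_pos n with rfl | hn
  · simp [digitSum]
  · rw [digitSum, Finset.sum_range_succ']
    have h1 : ∀ t, n / q ^ (t + 1) % q = (n / q) / q ^ t % q := by
      intro t
      rw [pow_succ', Nat.div_div_eq_div_mul]
  -- rewrite terms
    simp only [h1, pow_zero, Nat.div_one]
    rw [← digitSum_eq hq (Nat.div_lt_self hn (by omega)), Nat.add_comm]

lemma Cq_rec {q n m : ℕ} (hq : 2 ≤ q) :
    Cq q n m = Nat.choose (n % q) (m % q) * Cq q (n / q) (m / q) := by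
  rcases Nat.eq_zero_or_pos (n + m) with h0 | h0
  · have hn : n = 0 := by omega
    have hm : m = 0 := by omega
    subst hn; subst hm
    simp [Cq]
  · rw [Cq, Finset.prod_range_succ']
    have h1 : ∀ t, n / q ^ (t + 1) % q = (n / q) / q ^ t % q := fun t => by
      rw [pow_succ', Nat.div_div_eq_div_mul]
    have h2 : ∀ t, m / q ^ (t + 1) % q = (m / q) / q ^ t % q := fun t => by
      rw [pow_succ', Nat.div_div_eq_div_mul]
    simp only [h1, h2, pow_zero, Nat.div_one]
    have hlt : n / q + m / q < n + m := by
      have h3 : n / q ≤ n := Nat.div_le_self n q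
      have h4 : m / q ≤ m := Nat.div_le_self m q
      have h5 : n ≠ 0 → n / q < n := fun h => Nat.div_lt_self (by omega) (by omega)
      have h6 : m ≠ 0 → m / q < m := fun h => Nat.div_lt_self (by omega) (by omega)
      by_cases hn : n = 0
      · subst hn; simpa using h6 (by omega)
      · have := h5 hn; omega
    rw [← Cq_eq hq hlt, Nat.mul_comm]

lemma Cq_zero {q : ℕ} (hq : 2 ≤ q) : ∀ m n : ℕ, n < m → Cq q n m = 0 := by
  intro m
  induction m using Nat.strong_induction_on with
  | _ m ih =>
    intro n hnm
    rw [Cq_rec hq]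
    by_cases hd : n % q < m % q
    · rw [Nat.choose_eq_zero_of_lt hd, Nat.zero_mul]
    · push_neg at hd
      have hq0 : 0 < q := by omega
      have e1 := Nat.div_add_mod n q
      have e2 := Nat.div_add_mod m q
      have hlt : q * (n / q) < q * (m / q) := by omega
      have hdiv : n / q < m / q := Nat.lt_of_mul_lt_mul_left hlt
      have hmq : m / q < m := Nat.div_lt_self (by omega) (by omega)
      rw [ih (m / q) hmq (n / q) hdiv, Nat.mul_zero]

lemma digitSum_mul_add {q c d : ℕ} (hq : 2 ≤ q) (hd : d < q) :
    digitSum q (q * c + d) = d + digitSum q c := by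
  rw [digitSum_rec hq, Nat.mul_add_mod, Nat.mul_add_div (by omega),
    Nat.mod_eq_of_lt hd, Nat.div_eq_of_lt hd, Nat.add_zero]

lemma sum_range_mul_reindex {M : Type*} [AddCommMonoid M] {q k : ℕ} (hq : 0 < q) (f : ℕ → M) :
    ∑ m ∈ Finset.range (q * k), f m
      = ∑ c ∈ Finset.range k, ∑ d ∈ Finset.range q, f (q * c + d) := by
  rw [← Finset.sum_product']
  apply Finset.sum_nbij' (i := fun m => (m / q, m % q)) (j := fun p => q * p.1 + p.2)
  · intro m hm
    rw [Finset.mem_range] at hm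
    rw [Finset.mem_product, Finset.mem_range, Finset.mem_range]
    exact ⟨Nat.div_lt_of_lt_mul (by omega), Nat.mod_lt _ hq⟩
  · intro p hp
    rw [Finset.mem_product, Finset.mem_range, Finset.mem_range] at hp
    rw [Finset.mem_range]
    calc q * p.1 + p.2 < q * p.1 + q := by omega
    _ = q * (p.1 + 1) := by ring
    _ ≤ q * k := Nat.mul_le_mul_left q (by omega)
  · intro m _
    rw [Nat.div_add_mod]
  · intro p hp
    rw [Finset.mem_product, Finset.mem_range, Finset.mem_range] at hp
    ext
    · simp [Nat.mul_add_div (by omega : 0 < q), Nat.div_eq_of_lt hp.2]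
    · simp [Nat.mul_add_mod, Nat.mod_eq_of_lt hp.2]
  · intro m _
    rw [Nat.div_add_mod]

lemma add_pow_ext {q b : ℕ} (hb : b < q) (φ β : ℝ) :
    (φ + β) ^ b = ∑ d ∈ Finset.range q, (Nat.choose b d : ℝ) * φ ^ d * β ^ (b - d) := by
  rw [add_pow]
  rw [Finset.sum_subset (Finset.range_subset_range.mpr hb) (fun d _ hd => by
    rw [Finset.mem_range, not_lt] at hd
    rw [Nat.choose_eq_zero_of_lt (by omega)]
    simp)]
  exact Finset.sum_congr rfl fun d _ => by ring

/-- The fractal binomial theorem: `(φ+β)^{{n}} = Σ_{m=0}^n C_q(n,m)·φ^{{m}}·β^{{n−m}}`. -/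
theorem stmt16 (q : ℕ) (hq : 2 ≤ q) (n : ℕ) (φ β : ℝ) :
    (φ + β) ^ digitSum q n =
      ∑ m ∈ Finset.range (n + 1),
        (Cq q n m : ℝ) * φ ^ digitSum q m * β ^ digitSum q (n - m) := by
  induction n using Nat.strong_induction_on with
  | _ n ih =>
  rcases Nat.eq_zero_or_pos n with rfl | hn
  · simp [digitSum, Cq]
  · have hq0 : 0 < q := by omega
    have hb : n % q < q := Nat.mod_lt _ hq0
    have ha : n / q < n := Nat.div_lt_self hn (by omega)
    have emod := Nat.div_add_mod n q
    have hext : n + 1 ≤ q * (n / q + 1) := by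
      have h : q * (n / q + 1) = q * (n / q) + q := by ring
      omega
    have key : ∑ m ∈ Finset.range (n + 1),
          (Cq q n m : ℝ) * φ ^ digitSum q m * β ^ digitSum q (n - m)
        = ∑ m ∈ Finset.range (q * (n / q + 1)),
          (Cq q n m : ℝ) * φ ^ digitSum q m * β ^ digitSum q (n - m) := by
      apply Finset.sum_subset (Finset.range_subset_range.mpr hext)
      intro m _ hm
      rw [Finset.mem_range, not_lt] at hm
      rw [Cq_zero hq m n (by omega)]
      simp
    rw [key, sum_range_mul_reindex hq0]
    have term : ∀ c ∈ Finset.range (n / q + 1), ∀ d ∈ Finset.range q,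
        (Cq q n (q * c + d) : ℝ) * φ ^ digitSum q (q * c + d)
            * β ^ digitSum q (n - (q * c + d))
          = ((Nat.choose (n % q) d : ℝ) * φ ^ d * β ^ (n % q - d))
            * ((Cq q (n / q) c : ℝ) * φ ^ digitSum q c * β ^ digitSum q (n / q - c)) := by
      intro c _ d hd
      rw [Finset.mem_range] at hd
      have hCq : Cq q n (q * c + d) = Nat.choose (n % q) d * Cq q (n / q) c := by
        rw [Cq_rec hq, Nat.mul_add_mod, Nat.mul_add_div hq0,
          Nat.mod_eq_of_lt hd, Nat.div_eq_of_lt hd, Nat.add_zero]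
      have hS : digitSum q (q * c + d) = d + digitSum q c := digitSum_mul_add hq hd
      by_cases hdb : d ≤ n % q
      · by_cases hca : c ≤ n / q
        · have e2 : q * (n / q - c) + q * c = q * (n / q) := by
            rw [← Nat.mul_add, Nat.sub_add_cancel hca]
          have e3 : q * c ≤ q * (n / q) := Nat.mul_le_mul_left q hca
          have hsub : n - (q * c + d) = q * (n / q - c) + (n % q - d) := by omega
          rw [hsub, digitSum_mul_add (c := n / q - c) (d := n % q - d) hq (by omega), hCq, hS]
          push_cast
          ring
        · push_neg at hca
          rw [hCq, Cq_zero hq c (n / q) hca]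
          simp
      · push_neg at hdb
        rw [hCq, Nat.choose_eq_zero_of_lt hdb]
        simp
    rw [Finset.sum_congr rfl (fun c hc => Finset.sum_congr rfl (term c hc))]
    have factor : ∀ c ∈ Finset.range (n / q + 1),
        ∑ d ∈ Finset.range q,
            ((Nat.choose (n % q) d : ℝ) * φ ^ d * β ^ (n % q - d))
            * ((Cq q (n / q) c : ℝ) * φ ^ digitSum q c * β ^ digitSum q (n / q - c))
          = (∑ d ∈ Finset.range q, (Nat.choose (n % q) d : ℝ) * φ ^ d * β ^ (n % q - d))
            * ((Cq q (n / q) c : ℝ) * φ ^ digitSum q c * β ^ digitSum q (n / q - c)) := by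
      intro c _
      rw [Finset.sum_mul]
    rw [Finset.sum_congr rfl factor, ← Finset.mul_sum, ← add_pow_ext hb φ β,
      ← ih (n / q) ha, digitSum_rec (n := n) hq, pow_add]
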